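/- Let J be an abelian topological monoid, X a topological vector space over ℂ, and φ ∈ P^n(J,X). If there is an integer k with 0 ≤ k < n such that φ(m•s) = m^k • φ(s) for every integer m ≥ 1 and every s ∈ J, then φ ∈ P^k(J,X). -/

import Mathlib

open scoped BigOperators

/-- Forward difference operator: `delta h f t = f (t + h) - f t`. -/
def delta {J X : Type*} [Add J] [Sub X] (h : J) (f : J → X) : J → X :=
  fun t => f (t + h) - f t

/-- `f : J → X` is a (continuous) polynomial of degree at most `n`,
i.e. `f ∈ P^n(J, X)`. -/
def IsPolyDeg {J X : Type*} [Add J] [Sub X] [Zero X] [TopologicalSpace J] [TopologicalSpace X]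
    (n : ℕ) (f : J → X) : Prop :=
  Continuous f ∧ ∀ h : J, (delta h)^[n + 1] f = 0

set_option linter.unusedSectionVars false

open Finset Polynomial

section Seq
variable {X : Type*} [AddCommGroup X] [Module ℂ X]

/-- difference operator on sequences -/
def Dd (f : ℕ → X) : ℕ → X := fun m => f (m + 1) - f m

/-- `Dd` as a linear endomorphism. -/
def DdE : (ℕ → X) →ₗ[ℂ] (ℕ → X) where
  toFun := Dd
  map_add' f g := by funext m; simp [Dd]; abel
  map_smul' c f := by funext m; simp [Dd, smul_sub]

lemma DdE_pow_apply (j : ℕ) (f : ℕ → X) : (DdE ^ j) f = Dd^[j] f := by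
  rw [Module.End.pow_apply]; rfl

lemma Dd_iter_zero (j : ℕ) : Dd^[j] (0 : ℕ → X) = 0 := by
  rw [← DdE_pow_apply]; exact map_zero _

lemma Dd_iter_ge {N : ℕ} {f : ℕ → X} (hf : Dd^[N + 1] f = 0) {j : ℕ} (hj : N + 1 ≤ j) :
    Dd^[j] f = 0 := by
  obtain ⟨d, rfl⟩ : ∃ d, j = d + (N + 1) := ⟨j - (N + 1), by omega⟩
  rw [Function.iterate_add_apply, hf, Dd_iter_zero]

/-- Newton's forward formula. -/
lemma newton (f : ℕ → X) (m : ℕ) :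
    f m = ∑ i ∈ range (m + 1), m.choose i • Dd^[i] f 0 := by
  induction m generalizing f with
  | zero => simp
  | succ m ih =>
    have h1 : f (m + 1) = Dd f m + f m := by simp [Dd]
    rw [h1, ih (Dd f), ih f]
    rw [Finset.sum_range_succ' (fun i => (m+1).choose i • Dd^[i] f 0) (m+1)]
    simp only [Nat.choose_succ_succ, add_smul, Nat.choose_zero_right, one_smul,
      Function.iterate_zero_apply, Finset.sum_add_distrib]
    have h2 : ∀ i, Dd^[i + 1] f 0 = Dd^[i] (Dd f) 0 := fun i => by
      rw [Function.iterate_succ_apply]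
    have h3 : ∑ i ∈ range (m + 1), m.choose (i+1) • Dd^[i+1] f 0
        = ∑ i ∈ range (m + 1), m.choose i • Dd^[i] f 0 - f 0 := by
      rw [Finset.sum_range_succ, Nat.choose_succ_self, zero_smul, add_zero,
        Finset.sum_range_succ' (fun i => m.choose i • Dd^[i] f 0) m]
      simp
    simp only [h2] at h3 ⊢
    rw [h3]
    abel

/-- Truncated Newton formula for polynomial sequences. -/
lemma newton_trunc {N : ℕ} {f : ℕ → X} (hf : Dd^[N + 1] f = 0) (m : ℕ) :
    f m = ∑ i ∈ range (N + 1), m.choose i • Dd^[i] f 0 := by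
  rw [newton f m]
  rcases le_total m N with h | h
  · apply Finset.sum_subset (by intro i hi; simp at hi ⊢; omega)
    intro i _ hi
    simp only [Finset.mem_range, not_lt] at hi
    rw [Nat.choose_eq_zero_of_lt (by omega), zero_smul]
  · symm
    apply Finset.sum_subset (by intro i hi; simp at hi ⊢; omega)
    intro i _ hi
    simp only [Finset.mem_range, not_lt] at hi
    rw [Dd_iter_ge hf (by omega), Pi.zero_apply, smul_zero]

/-- iterated difference of a finite sum of functions -/
lemma Dd_iter_sum {α : Type*} (s : Finset α) (F : α → ℕ → X) (j : ℕ) :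
    Dd^[j] (fun m => ∑ a ∈ s, F a m) = fun m => ∑ a ∈ s, Dd^[j] (F a) m := by
  have : (fun m => ∑ a ∈ s, F a m) = ∑ a ∈ s, F a := by
    funext m; simp
  rw [this, ← DdE_pow_apply, map_sum]
  funext m
  simp only [Finset.sum_apply]
  exact Finset.sum_congr rfl fun a _ => by rw [DdE_pow_apply]

lemma Dd_iter_smul (c : ℂ) (f : ℕ → X) (j : ℕ) :
    Dd^[j] (fun m => c • f m) = fun m => c • Dd^[j] f m := by
  have : (fun m => c • f m) = c • f := rfl
  rw [this, ← DdE_pow_apply, map_smul, DdE_pow_apply]; rfl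

lemma Dd_iter_sub (f g : ℕ → X) (j : ℕ) :
    Dd^[j] (fun m => f m - g m) = fun m => Dd^[j] f m - Dd^[j] g m := by
  have : (fun m => f m - g m) = f - g := rfl
  rw [this, ← DdE_pow_apply, map_sub]
  funext m; simp only [Pi.sub_apply, DdE_pow_apply]

/-- `m ↦ m^i • v` is a polynomial sequence of degree at most `i`. -/
lemma pow_smul_vanish (v : X) : ∀ i K : ℕ, i ≤ K →
    Dd^[K + 1] (fun m : ℕ => ((m : ℂ) ^ i) • v) = 0 := by
  intro i
  induction i using Nat.strong_induction_on with
  | _ i ih =>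
    intro K hK
    have hDd : Dd (fun m : ℕ => ((m : ℂ) ^ i) • v)
        = fun m : ℕ => ∑ r ∈ range i, ((i.choose r : ℂ)) • (((m : ℂ) ^ r) • v) := by
      funext m
      have hb : (((m : ℕ) : ℂ) + 1) ^ i = ∑ r ∈ range (i + 1), (m : ℂ) ^ r * (i.choose r : ℂ) := by
        have := add_pow ((m : ℂ)) 1 i
        simpa using this
      simp only [Dd]
      push_cast
      rw [← sub_smul, hb, Finset.sum_range_succ]
      simp only [Nat.choose_self, Nat.cast_one, mul_one, add_sub_cancel_right, Finset.sum_smul,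
        smul_smul]
      exact Finset.sum_congr rfl fun r _ => by ring_nf
    rcases Nat.eq_zero_or_pos i with rfl | hi
    · have : Dd (fun m : ℕ => ((m : ℂ) ^ 0) • v) = 0 := by rw [hDd]; funext m; simp
      rw [Function.iterate_succ_apply, this, Dd_iter_zero]
    · obtain ⟨K', rfl⟩ : ∃ K', K = K' + 1 := ⟨K - 1, by omega⟩
      rw [Function.iterate_succ_apply, hDd, Dd_iter_sum]
      funext m
      simp only [Pi.zero_apply]
      apply Finset.sum_eq_zero
      intro r hr
      simp only [Finset.mem_range] at hr
      rw [Dd_iter_smul, ih r hr K' (by omega)]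
      simp


end Seq


/-- Polynomial representing binomial coefficients: `(pc i).eval m = choose m i`. -/
noncomputable def pc : ℕ → Polynomial ℂ
  | 0 => 1
  | (i + 1) => (((i : ℂ) + 1)⁻¹) • (pc i * (Polynomial.X - Polynomial.C (i : ℂ)))

lemma pc_natDegree (i : ℕ) : (pc i).natDegree ≤ i := by
  induction i with
  | zero => simp [pc]
  | succ i ih =>
    rw [pc]
    refine le_trans (natDegree_smul_le _ _) (le_trans (natDegree_mul_le) ?_)
    have : (Polynomial.X - Polynomial.C (i:ℂ)).natDegree ≤ 1 := by
      simpa using natDegree_X_sub_C_le (i:ℂ)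
    omega

lemma pc_eval (i m : ℕ) : (pc i).eval (m : ℂ) = (m.choose i : ℂ) := by
  induction i with
  | zero => simp [pc]
  | succ i ih =>
    rw [pc]
    simp only [eval_smul, eval_mul, eval_sub, eval_X, eval_C, smul_eq_mul, ih]
    have hne : ((i : ℂ) + 1) ≠ 0 := by
      have : ((i + 1 : ℕ) : ℂ) ≠ 0 := Nat.cast_ne_zero.mpr (by omega)
      push_cast at this; exact this
    rw [inv_mul_eq_iff_eq_mul₀ hne]
    rcases le_or_gt i m with h | h
    · have key := Nat.choose_succ_right_eq m i
      have : (m.choose (i+1) * (i+1) : ℂ) = (m.choose i * (m - i) : ℂ) := by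
        exact_mod_cast congrArg (fun x : ℕ => (x : ℂ)) key
      push_cast [Nat.cast_sub h] at this
      rw [← this]; ring
    · rw [Nat.choose_eq_zero_of_lt h, Nat.choose_eq_zero_of_lt (by omega)]
      simp

section S4
variable {X : Type*} [AddCommGroup X] [Module ℂ X]

/-- Monomial coefficients of a polynomial sequence. -/
noncomputable def Wcoef (N : ℕ) (f : ℕ → X) (r : ℕ) : X :=
  ∑ i ∈ Finset.range (N + 1), (pc i).coeff r • Dd^[i] f 0

/-- Monomial representation of a polynomial sequence. -/
lemma rep1 {N : ℕ} {f : ℕ → X} (hf : Dd^[N + 1] f = 0) (m : ℕ) :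
    f m = ∑ r ∈ range (N + 1), ((m : ℂ) ^ r) • Wcoef N f r := by
  rw [newton_trunc hf m]
  have step1 : ∀ i ∈ range (N + 1),
      m.choose i • Dd^[i] f 0
        = ∑ r ∈ range (N + 1), ((m:ℂ) ^ r) • ((pc i).coeff r • Dd^[i] f 0) := by
    intro i hi
    simp only [Finset.mem_range] at hi
    rw [← Nat.cast_smul_eq_nsmul ℂ, ← pc_eval i m,
      Polynomial.eval_eq_sum_range' (lt_of_le_of_lt (pc_natDegree i) hi) ((m:ℂ)),
      Finset.sum_smul]
    exact Finset.sum_congr rfl fun r _ => by rw [smul_smul, mul_comm]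
  rw [Finset.sum_congr rfl step1, Finset.sum_comm]
  exact Finset.sum_congr rfl fun r _ => by rw [Wcoef, Finset.smul_sum]

/-- Extraction: monomial coordinates of the zero sequence vanish. -/
lemma extract {N : ℕ} (v : ℕ → X)
    (H : ∀ m : ℕ, 1 ≤ m → ∑ i ∈ range (N + 1), ((m : ℂ) ^ i) • v i = 0) :
    ∀ i, i ≤ N → v i = 0 := by
  set M : Matrix (Fin (N + 1)) (Fin (N + 1)) ℂ :=
    Matrix.vandermonde (fun j : Fin (N + 1) => ((j : ℕ) : ℂ) + 1) with hM
  have hdet : IsUnit M.det := by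
    rw [isUnit_iff_ne_zero]
    apply Matrix.det_vandermonde_ne_zero_iff.mpr
    intro a b hab
    have : ((a : ℕ) : ℂ) = ((b : ℕ) : ℂ) := by linear_combination hab
    exact Fin.ext (Nat.cast_injective this)
  have hinv : M⁻¹ * M = 1 := Matrix.nonsing_inv_mul M hdet
  have key : ∀ j : Fin (N + 1), ∑ i : Fin (N + 1), M j i • v i = 0 := by
    intro j
    have h1 := H ((j : ℕ) + 1) (by omega)
    rw [Finset.sum_range (fun i => ((((j:ℕ) + 1 : ℕ) : ℂ) ^ i) • v i)] at h1
    rw [← h1]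
    apply Finset.sum_congr rfl
    intro i _
    congr 1
    simp [hM, Matrix.vandermonde]
  intro i hi
  have hfin : v i = ∑ i' : Fin (N + 1), (1 : Matrix (Fin (N+1)) (Fin (N+1)) ℂ) ⟨i, by omega⟩ i' • v i' := by
    rw [Finset.sum_eq_single (⟨i, by omega⟩ : Fin (N + 1))]
    · simp [Matrix.one_apply]
    · intro b _ hb; simp [Matrix.one_apply, (Ne.symm hb)]
    · intro hmem; exact absurd (Finset.mem_univ _) hmem
  rw [hfin, ← hinv]
  calc ∑ i' : Fin (N+1), (M⁻¹ * M) ⟨i, by omega⟩ i' • v i'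
      = ∑ i' : Fin (N+1), ∑ j : Fin (N+1), (M⁻¹ ⟨i, by omega⟩ j * M j i') • v i' := by
        apply Finset.sum_congr rfl; intro i' _
        rw [Matrix.mul_apply, Finset.sum_smul]
    _ = ∑ j : Fin (N+1), M⁻¹ ⟨i, by omega⟩ j • ∑ i' : Fin (N+1), M j i' • v i' := by
        rw [Finset.sum_comm]
        apply Finset.sum_congr rfl; intro j _
        rw [Finset.smul_sum]
        exact Finset.sum_congr rfl fun i' _ => by rw [smul_smul]
    _ = 0 := by simp [key]

end S4

section S5
variable {J : Type*} [AddCommMonoid J] {X : Type*} [AddCommGroup X] [Module ℂ X]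

/-- Differences along a ray in terms of `delta`. -/
lemma deltaG (φ : J → X) (h u : J) (j : ℕ) :
    ∀ y : ℕ, Dd^[j] (fun y' : ℕ => φ (u + y' • h)) y = ((delta h)^[j] φ) (u + y • h) := by
  induction j with
  | zero => intro y; simp
  | succ j ih =>
    intro y
    rw [Function.iterate_succ_apply' Dd, Function.iterate_succ_apply' (delta h)]
    show Dd^[j] (fun y' : ℕ => φ (u + y' • h)) (y + 1) - Dd^[j] (fun y' : ℕ => φ (u + y' • h)) y = _
    rw [ih, ih]
    show _ = ((delta h)^[j] φ) ((u + y • h) + h) - ((delta h)^[j] φ) (u + y • h)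
    rw [succ_nsmul, ← add_assoc]

/-- Two-variable monomial representation. -/
lemma rep2 {N : ℕ} (Q : ℕ → ℕ → X)
    (h1 : ∀ y, Dd^[N + 1] (fun x => Q x y) = 0)
    (h2 : ∀ x, Dd^[N + 1] (Q x) = 0) :
    ∃ d : ℕ → ℕ → X, ∀ x y, Q x y = ∑ r ∈ range (N + 1), ∑ s ∈ range (N + 1),
      (((x : ℂ)) ^ r * ((y : ℂ)) ^ s) • d r s := by
  have hb : ∀ i y₀, Dd^[N + 1] (fun x => Dd^[i] (Q x) y₀) = 0 := by
    intro i
    induction i with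
    | zero => intro y₀; exact h1 y₀
    | succ i ih =>
      intro y₀
      have e : (fun x => Dd^[i + 1] (Q x) y₀)
          = fun x => (fun x' => Dd^[i] (Q x') (y₀ + 1)) x - (fun x' => Dd^[i] (Q x') y₀) x := by
        funext x
        rw [Function.iterate_succ_apply' Dd]
        rfl
      rw [e, Dd_iter_sub, ih, ih]
      funext x; simp
  have hg : ∀ s, Dd^[N + 1] (fun x => Wcoef N (Q x) s) = 0 := by
    intro s
    have e : (fun x => Wcoef N (Q x) s)
        = fun x => ∑ i ∈ range (N + 1), (pc i).coeff s • (fun x' => Dd^[i] (Q x') 0) x := by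
      funext x; rfl
    rw [e, Dd_iter_sum]
    funext x
    simp only [Pi.zero_apply]
    apply Finset.sum_eq_zero
    intro i _
    rw [Dd_iter_smul, hb i 0]
    simp
  refine ⟨fun r s => Wcoef N (fun x => Wcoef N (Q x) s) r, ?_⟩
  intro x y
  rw [rep1 (h2 x) y]
  have e2 : ∀ s ∈ range (N + 1), ((y:ℂ) ^ s) • Wcoef N (Q x) s
      = ∑ r ∈ range (N + 1), ((x:ℂ) ^ r * (y:ℂ) ^ s) • Wcoef N (fun x' => Wcoef N (Q x') s) r := by
    intro s _
    rw [rep1 (hg s) x, Finset.smul_sum]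
    exact Finset.sum_congr rfl fun r _ => by rw [smul_smul, mul_comm]
  rw [Finset.sum_congr rfl e2, Finset.sum_comm]

end S5

/-- if `φ ∈ P^n(J, X)` on an abelian topological monoid `J` and
`φ (m • s) = m^k • φ s` for some `0 ≤ k < n`, every `m ≥ 1` and every `s`,
then `φ ∈ P^k(J, X)`. -/
theorem homogeneous_polynomial_degree_drop
    {J X : Type*} [AddCommMonoid J] [TopologicalSpace J] [ContinuousAdd J]
    [AddCommGroup X] [Module ℂ X] [TopologicalSpace X] [IsTopologicalAddGroup X]
    [ContinuousSMul ℂ X]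
    (n k : ℕ) (φ : J → X) (hφ : IsPolyDeg n φ) (hk : k < n)
    (hhom : ∀ m : ℕ, 1 ≤ m → ∀ s : J, φ (m • s) = ((m : ℂ) ^ k) • φ s) :
    IsPolyDeg k φ := by
  obtain ⟨hc, hdlt⟩ := hφ
  refine ⟨hc, ?_⟩
  intro h
  funext t
  simp only [Pi.zero_apply]
  -- the two-variable sequence (x, y) ↦ φ (x • t + y • h) is bi-polynomial of bidegree ≤ (n,n)
  have h2 : ∀ x : ℕ, Dd^[n + 1] (fun y : ℕ => φ (x • t + y • h)) = 0 := by
    intro x; funext y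
    rw [deltaG φ h (x • t) (n + 1) y, hdlt h]
    simp
  have h1 : ∀ y : ℕ, Dd^[n + 1] (fun x : ℕ => φ (x • t + y • h)) = 0 := by
    intro y; funext x
    have e : (fun x' : ℕ => φ (x' • t + y • h)) = fun x' : ℕ => φ (y • h + x' • t) := by
      funext x'; rw [add_comm]
    rw [e, deltaG φ t (y • h) (n + 1) x, hdlt t]
    simp
  obtain ⟨d, hrep0⟩ := rep2 (N := n) (fun x y => φ (x • t + y • h)) h1 h2
  have hrep : ∀ x y : ℕ, φ (x • t + y • h) = ∑ r ∈ Finset.range (n + 1),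
      ∑ s ∈ Finset.range (n + 1), (((x : ℂ)) ^ r * ((y : ℂ)) ^ s) • d r s := hrep0
  -- Step 1: for i ≠ k, the "degree i" part of the representation vanishes
  have hv : ∀ (x y i : ℕ), i ≤ 2 * n + 1 → i ≠ k →
      ∑ r ∈ Finset.range (n + 1), ∑ s ∈ Finset.range (n + 1),
        (if r + s = i then (x : ℂ) ^ r * (y : ℂ) ^ s else 0) • d r s = 0 := by
    intro x y
    have hvz := extract (N := 2 * n + 1)
      (fun i =>
        (∑ r ∈ Finset.range (n + 1), ∑ s ∈ Finset.range (n + 1),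
          (if r + s = i then (x : ℂ) ^ r * (y : ℂ) ^ s else 0) • d r s)
        - (if i = k then ∑ r ∈ Finset.range (n + 1), ∑ s ∈ Finset.range (n + 1),
            (((x : ℂ)) ^ r * ((y : ℂ)) ^ s) • d r s else 0)) ?_
    · intro i hi hik
      have h0 := hvz i hi
      rwa [if_neg hik, sub_zero] at h0
    · intro m hm
      simp only [smul_sub]
      rw [Finset.sum_sub_distrib]
      have hA : ∑ i ∈ Finset.range (2 * n + 1 + 1), ((m : ℂ) ^ i) •
            (∑ r ∈ Finset.range (n + 1), ∑ s ∈ Finset.range (n + 1),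
              (if r + s = i then (x : ℂ) ^ r * (y : ℂ) ^ s else 0) • d r s)
          = ∑ r ∈ Finset.range (n + 1), ∑ s ∈ Finset.range (n + 1),
              ((m : ℂ) ^ (r + s) * ((x : ℂ) ^ r * (y : ℂ) ^ s)) • d r s := by
        simp only [Finset.smul_sum]
        rw [Finset.sum_comm]
        apply Finset.sum_congr rfl; intro r hr
        rw [Finset.sum_comm]
        apply Finset.sum_congr rfl; intro s hs
        have e1 : ∀ i, ((m : ℂ) ^ i) • ((if r + s = i then (x : ℂ) ^ r * (y : ℂ) ^ s else 0) • d r s)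
            = if r + s = i then ((m : ℂ) ^ (r + s) * ((x : ℂ) ^ r * (y : ℂ) ^ s)) • d r s else 0 := by
          intro i
          by_cases hc' : r + s = i
          · subst hc'; rw [if_pos rfl, if_pos rfl, smul_smul]
          · rw [if_neg hc', if_neg hc', zero_smul, smul_zero]
        rw [Finset.sum_congr rfl (fun i _ => e1 i), Finset.sum_ite_eq]
        rw [if_pos]
        simp only [Finset.mem_range] at hr hs
        simp only [Finset.mem_range]
        omega
      have hB : ∑ i ∈ Finset.range (2 * n + 1 + 1), ((m : ℂ) ^ i) •
            (if i = k then ∑ r ∈ Finset.range (n + 1), ∑ s ∈ Finset.range (n + 1),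
              (((x : ℂ)) ^ r * ((y : ℂ)) ^ s) • d r s else 0)
          = ((m : ℂ) ^ k) • ∑ r ∈ Finset.range (n + 1), ∑ s ∈ Finset.range (n + 1),
              (((x : ℂ)) ^ r * ((y : ℂ)) ^ s) • d r s := by
        have e1 : ∀ i, ((m : ℂ) ^ i) • (if i = k then ∑ r ∈ Finset.range (n + 1),
              ∑ s ∈ Finset.range (n + 1), (((x : ℂ)) ^ r * ((y : ℂ)) ^ s) • d r s else 0)
            = if i = k then ((m : ℂ) ^ i) • ∑ r ∈ Finset.range (n + 1),
              ∑ s ∈ Finset.range (n + 1), (((x : ℂ)) ^ r * ((y : ℂ)) ^ s) • d r s else 0 := by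
          intro i
          by_cases hc' : i = k
          · rw [if_pos hc', if_pos hc']
          · rw [if_neg hc', if_neg hc', smul_zero]
        rw [Finset.sum_congr rfl (fun i _ => e1 i), Finset.sum_ite_eq']
        rw [if_pos (by simp only [Finset.mem_range]; omega)]
      rw [hA, hB]
      rw [sub_eq_zero]
      -- homogeneity
      have h3 : m • (x • t + y • h) = (m * x) • t + (m * y) • h := by
        rw [smul_add, mul_smul, mul_smul]
      have h4 := hhom m hm (x • t + y • h)
      rw [h3, hrep (m * x) (m * y), hrep x y] at h4
      rw [← h4]
      apply Finset.sum_congr rfl; intro r _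
      apply Finset.sum_congr rfl; intro s _
      congr 1
      push_cast
      ring
  -- Step 2: coefficients of total degree > k vanish
  have key : ∀ r s : ℕ, r < n + 1 → s < n + 1 → k < r + s → d r s = 0 := by
    intro r' s' hr' hs' hks
    have hi1 : r' + s' ≤ 2 * n + 1 := by omega
    have hi2 : r' + s' ≠ k := by omega
    have hx : ∀ x : ℕ, 1 ≤ x →
        ∑ r ∈ Finset.range (n + 1), ((x : ℂ) ^ r) •
          (∑ s ∈ Finset.range (n + 1), (if r + s = r' + s' then (1 : ℂ) else 0) • d r s) = 0 := by
      intro x hx1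
      have h0 := hv x 1 (r' + s') hi1 hi2
      rw [← h0]
      apply Finset.sum_congr rfl; intro r _
      rw [Finset.smul_sum]
      apply Finset.sum_congr rfl; intro s _
      by_cases hc' : r + s = r' + s'
      · rw [if_pos hc', if_pos hc', smul_smul]
        norm_num
      · rw [if_neg hc', if_neg hc', zero_smul, smul_zero]
    have h5 := extract (N := n) _ hx r' (by omega)
    rw [Finset.sum_congr rfl (fun s _ => by
        rw [if_congr (show r' + s = r' + s' ↔ s = s' by omega) rfl rfl])] at h5
    have e2 : ∀ s, (if s = s' then (1 : ℂ) else 0) • d r' s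
        = if s = s' then d r' s else 0 := by
      intro s
      by_cases hc' : s = s'
      · rw [if_pos hc', if_pos hc', one_smul]
      · rw [if_neg hc', if_neg hc', zero_smul]
    rw [Finset.sum_congr rfl (fun s _ => e2 s), Finset.sum_ite_eq',
      if_pos (by simp only [Finset.mem_range]; omega)] at h5
    exact h5
  -- Step 3: conclude that y ↦ φ (t + y • h) is a polynomial sequence of degree ≤ k
  have hq1 : (fun y : ℕ => φ (t + y • h)) = fun y : ℕ => ∑ s ∈ Finset.range (n + 1),
      ((y : ℂ) ^ s) • (∑ r ∈ Finset.range (n + 1), d r s) := by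
    funext y
    have h6 := hrep 1 y
    rw [one_nsmul] at h6
    rw [h6, Finset.sum_comm]
    apply Finset.sum_congr rfl; intro s _
    rw [Finset.smul_sum]
    apply Finset.sum_congr rfl; intro r _
    norm_num
  have hDk : Dd^[k + 1] (fun y : ℕ => φ (t + y • h)) = 0 := by
    rw [hq1]
    rw [Dd_iter_sum (Finset.range (n + 1))
      (fun s y => ((y : ℂ) ^ s) • (∑ r ∈ Finset.range (n + 1), d r s)) (k + 1)]
    funext y
    simp only [Pi.zero_apply]
    apply Finset.sum_eq_zero
    intro s hs
    rcases le_or_gt s k with hsk | hsk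
    · rw [pow_smul_vanish _ s k hsk]
      rfl
    · have hw : (∑ r ∈ Finset.range (n + 1), d r s) = 0 := by
        apply Finset.sum_eq_zero
        intro r hr
        exact key r s (Finset.mem_range.mp hr) (Finset.mem_range.mp hs) (by omega)
      have e3 : (fun y : ℕ => ((y : ℂ) ^ s) • (∑ r ∈ Finset.range (n + 1), d r s))
          = (0 : ℕ → X) := by
        funext y'; rw [hw, smul_zero]; rfl
      rw [e3, Dd_iter_zero]
      rfl
  have efin : ((delta h)^[k + 1] φ) t = Dd^[k + 1] (fun y : ℕ => φ (t + y • h)) 0 := by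
    have h7 := deltaG φ h t (k + 1) 0
    rw [zero_smul, add_zero] at h7
    exact h7.symm
  rw [efin, hDk]
  rfl
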